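/- Every edge-preserving policy of a finite MDP is class-preserving: if π is a stationary policy with π(a|s) > 0 for all s in the TSCCs of the MDP and all a ∈ A(s), and the union of TSCCs of the induced chain equals that of the MDP, then each TSCC of the MDP is exactly a TSCC of the induced Markov chain M_π. -/

import Mathlib

open Filter

/-- A terminal strongly connected component of the directed graph with edge relation
`E`: nonempty, strongly connected, closed (no outgoing edges), and reachable from the
support of the initial distribution `β`. -/
def IsTSCC {S : Type*} (E : S → S → Prop) (β : S → ℝ) (C : Set S) : Prop :=
  C.Nonempty ∧
  (∀ s ∈ C, ∀ s' ∈ C, Relation.ReflTransGen E s s') ∧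
  (∀ s ∈ C, ∀ s', E s s' → s' ∈ C) ∧
  (∃ s₀, 0 < β s₀ ∧ ∃ s ∈ C, Relation.ReflTransGen E s₀ s)

/-- The union of all TSCC states. -/
def rSet {S : Type*} (E : S → S → Prop) (β : S → ℝ) : Set S :=
  {s | ∃ C : Set S, IsTSCC E β C ∧ s ∈ C}

/-- Edge relation of the transition graph of an MDP. -/
def mdpEdge {S A : Type*} (avail : S → Finset A) (T : S → A → S → ℝ)
    (s s' : S) : Prop :=
  ∃ a ∈ avail s, 0 < T s a s'

/-- Edge relation of the transition graph of the Markov chain induced by policy `π`. -/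
def chainEdge {S A : Type*} (avail : S → Finset A) (T : S → A → S → ℝ)
    (π : S → A → ℝ) (s s' : S) : Prop :=
  0 < ∑ a ∈ avail s, π s a * T s a s'

/-- `π` is a stationary policy: a probability distribution over `avail s` at each `s`. -/
def IsPolicy {S A : Type*} (avail : S → Finset A) (π : S → A → ℝ) : Prop :=
  (∀ s a, 0 ≤ π s a) ∧ ∀ s, ∑ a ∈ avail s, π s a = 1

/-- The multichain LP constraints: stationarity of `x`, flow balance of `y` with
initial distribution `β`, `x` vanishing outside the TSCCs, `x ∈ [0,1]`, `y ≥ 0`. -/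
def LPConstraints {S A : Type*} [Fintype S] (avail : S → Finset A)
    (T : S → A → S → ℝ) (β : S → ℝ) (x y : S → A → ℝ) : Prop :=
  (∀ s a, 0 ≤ x s a ∧ x s a ≤ 1) ∧ (∀ s a, 0 ≤ y s a) ∧
  (∀ s', ∑ s, ∑ a ∈ avail s, x s a * T s a s' = ∑ a ∈ avail s', x s' a) ∧
  (∀ s', ∑ s, ∑ a ∈ avail s, y s a * T s a s' =
      (∑ a ∈ avail s', (x s' a + y s' a)) - β s') ∧
  (∀ s, s ∉ rSet (mdpEdge avail T) β → ∑ a ∈ avail s, x s a = 0)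

/-- `π` is the policy derived from `(x,y)` by normalization. -/
def DerivedPolicy {S A : Type*} (avail : S → Finset A)
    (x y π : S → A → ℝ) : Prop :=
  (∀ s, 0 < ∑ a ∈ avail s, x s a →
      ∀ a, π s a = x s a / ∑ a' ∈ avail s, x s a') ∧
  (∀ s, ∑ a ∈ avail s, x s a = 0 → 0 < ∑ a ∈ avail s, y s a →
      ∀ a, π s a = y s a / ∑ a' ∈ avail s, y s a')

/-- `π` is class-preserving up to unichain: the recurrent set of the induced chain lies
inside the TSCCs of the MDP, and each TSCC of the MDP contains a unique TSCC of the
induced chain. -/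
def IsCPU {S A : Type*} (avail : S → Finset A) (T : S → A → S → ℝ)
    (β : S → ℝ) (π : S → A → ℝ) : Prop :=
  rSet (chainEdge avail T π) β ⊆ rSet (mdpEdge avail T) β ∧
  ∀ C : Set S, IsTSCC (mdpEdge avail T) β C →
    ∃! D : Set S, D ⊆ C ∧ IsTSCC (chainEdge avail T π) β D

/-- `π` is class-preserving: the induced chain has exactly the TSCCs of the MDP. -/
def IsCP {S A : Type*} (avail : S → Finset A) (T : S → A → S → ℝ)
    (β : S → ℝ) (π : S → A → ℝ) : Prop :=
  rSet (chainEdge avail T π) β = rSet (mdpEdge avail T) β ∧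
  ∀ C : Set S, IsTSCC (mdpEdge avail T) β C ↔ IsTSCC (chainEdge avail T π) β C

/-- `π` is edge-preserving: it plays every available action on the TSCC states of the
MDP and its induced recurrent set equals that of the MDP. -/
def IsEP {S A : Type*} (avail : S → Finset A) (T : S → A → S → ℝ)
    (β : S → ℝ) (π : S → A → ℝ) : Prop :=
  rSet (chainEdge avail T π) β = rSet (mdpEdge avail T) β ∧
  ∀ s ∈ rSet (mdpEdge avail T) β, ∀ a ∈ avail s, 0 < π s a

/-- Every edge-preserving policy of a finite MDP is class-preserving:
if `π` plays every available action with positive probability on the TSCC states and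
the union of TSCC states of the induced chain equals that of the MDP, then each TSCC
of the MDP is exactly a TSCC of the induced Markov chain `M_π`. -/
theorem edge_preserving_tscc {S A : Type*} [Fintype S]
    (avail : S → Finset A) (T : S → A → S → ℝ) (β : S → ℝ) (π : S → A → ℝ)
    (hT0 : ∀ s a s', 0 ≤ T s a s')
    (hpol : IsPolicy avail π)
    (hpos : ∀ s ∈ rSet (mdpEdge avail T) β, ∀ a ∈ avail s, 0 < π s a)
    (hrec : rSet (chainEdge avail T π) β = rSet (mdpEdge avail T) β) :
    ∀ C : Set S, IsTSCC (mdpEdge avail T) β C →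
      IsTSCC (chainEdge avail T π) β C := by
  intro C hC
  obtain ⟨hne, hconn, hclosed, hreach⟩ := hC
  -- members of C are in rSet mdp
  have hCr : ∀ s ∈ C, s ∈ rSet (mdpEdge avail T) β := fun s hs =>
    ⟨C, ⟨hne, hconn, hclosed, hreach⟩, hs⟩
  -- chainEdge implies mdpEdge
  have hce : ∀ s s', chainEdge avail T π s s' → mdpEdge avail T s s' := by
    intro s s' h
    have h' : (∑ a ∈ avail s, (0:ℝ)) < ∑ a ∈ avail s, π s a * T s a s' := by
      simpa [chainEdge] using h
    obtain ⟨a, ha, hlt⟩ := Finset.exists_lt_of_sum_lt h'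
    refine ⟨a, ha, ?_⟩
    by_contra hT
    push_neg at hT
    have hz : T s a s' = 0 := le_antisymm hT (hT0 s a s')
    rw [hz, mul_zero] at hlt
    exact lt_irrefl 0 hlt
  -- on rSet, mdpEdge implies chainEdge
  have hec : ∀ s ∈ rSet (mdpEdge avail T) β, ∀ s', mdpEdge avail T s s' →
      chainEdge avail T π s s' := by
    intro s hs s' ⟨a, ha, hT⟩
    refine Finset.sum_pos' (fun b hb => mul_nonneg (hpol.1 s b) (hT0 s b s')) ?_
    exact ⟨a, ha, mul_pos (hpos s hs a ha) hT⟩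
  -- mdp paths within C become chain paths
  have hpath : ∀ s ∈ C, ∀ s', Relation.ReflTransGen (mdpEdge avail T) s s' →
      Relation.ReflTransGen (chainEdge avail T π) s s' ∧ s' ∈ C := by
    intro s hs s' h
    induction h with
    | refl => exact ⟨Relation.ReflTransGen.refl, hs⟩
    | tail hbc hed ih =>
      obtain ⟨hp, hb⟩ := ih
      exact ⟨hp.tail (hec _ (hCr _ hb) _ hed), hclosed _ hb _ hed⟩
  refine ⟨hne, ?_, ?_, ?_⟩
  · intro s hs s' hs'
    exact (hpath s hs s' (hconn s hs s' hs')).1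
  · intro s hs s' he
    exact hclosed s hs s' (hce s s' he)
  · -- reachability via hrec
    obtain ⟨s, hs⟩ := hne
    have : s ∈ rSet (chainEdge avail T π) β := hrec ▸ hCr s hs
    obtain ⟨D, ⟨hDne, hDconn, hDclosed, s₀, hβ, d, hd, hpath'⟩, hsD⟩ := this
    exact ⟨s₀, hβ, s, hs, hpath'.trans (hDconn d hd s hsD)⟩
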